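/- Let F be a complex Banach space, let K and K' be bounded linear operators on F, and let P be a bounded linear projection on F (P ∘ P = P) whose range M is a finite-dimensional subspace of dimension m ≥ 1 that is invariant under K' (i.e., K'(M) ⊆ M). Let g : M → M be the restriction of K' to M, and let h : M → M be the map x ↦ P(K x) (which takes values in M since P projects onto M). Then |(1/m)·tr(h) − (1/m)·tr(g)| ≤ ‖P‖ · ‖(K − K') ∘ P‖, where ‖·‖ denotes operator norms. -/

import Mathlib

open Polynomial

/-- Every root of the characteristic polynomial of an endomorphism of a
finite-dimensional vector space is an eigenvalue. -/
lemma exists_eigenvector_of_isRoot_charpoly {E : Type*} [AddCommGroup E]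
    [Module ℂ E] [FiniteDimensional ℂ E] (T : E →ₗ[ℂ] E) (lam : ℂ)
    (hroot : ((LinearMap.toMatrix (Module.finBasis ℂ E) (Module.finBasis ℂ E) T).charpoly).IsRoot lam) :
    ∃ x : E, x ≠ 0 ∧ T x = lam • x := by
  set b := Module.finBasis ℂ E
  set A := LinearMap.toMatrix b b T with hA
  -- evaluate charpoly at lam
  have heval : (A.charpoly).eval lam = ((A.charmatrix).map (Polynomial.evalRingHom lam)).det := by
    rw [Matrix.charpoly, ← Polynomial.coe_evalRingHom, RingHom.map_det, RingHom.mapMatrix_apply]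
  have hmap : (A.charmatrix).map (Polynomial.evalRingHom lam) =
      lam • (1 : Matrix _ _ ℂ) - A := by
    ext i j
    rcases eq_or_ne i j with rfl | hij
    · simp [Matrix.charmatrix_apply_eq, Matrix.one_apply_eq]
    · simp [Matrix.charmatrix_apply_ne _ _ _ hij, Matrix.one_apply_ne hij]
  have hdet : (lam • (1 : Matrix _ _ ℂ) - A).det = 0 := by
    rw [← hmap, ← heval]; exact hroot
  obtain ⟨v, hv, hmul⟩ := (Matrix.exists_mulVec_eq_zero_iff).2 hdet
  refine ⟨b.equivFun.symm v, b.equivFun.symm.map_ne_zero_iff.2 hv, ?_⟩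
  have hrepr : ⇑(b.repr (b.equivFun.symm v)) = v := by
    rw [← Module.Basis.equivFun_apply]
    exact b.equivFun.apply_symm_apply v
  have hmat : LinearMap.toMatrix b b (lam • (LinearMap.id : E →ₗ[ℂ] E) - T) =
      lam • (1 : Matrix _ _ ℂ) - A := by
    rw [map_sub, map_smul, LinearMap.toMatrix_id]
  have := LinearMap.toMatrix_mulVec_repr b b (lam • (LinearMap.id : E →ₗ[ℂ] E) - T)
      (b.equivFun.symm v)
  rw [hmat, hrepr, hmul] at this
  have h1 : b.repr ((lam • (LinearMap.id : E →ₗ[ℂ] E) - T) (b.equivFun.symm v)) = 0 := by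
    ext i; exact (congrFun this i).symm
  have h0 : (lam • (LinearMap.id : E →ₗ[ℂ] E) - T) (b.equivFun.symm v) = 0 := by
    simpa using congrArg b.repr.symm h1
  simp only [LinearMap.sub_apply, LinearMap.smul_apply, LinearMap.id_apply] at h0
  exact (sub_eq_zero.mp h0).symm

/-- If an endomorphism of a finite-dimensional complex normed space satisfies
`‖T x‖ ≤ C * ‖x‖`, then `|tr T| ≤ finrank * C`. -/
lemma abs_trace_le_finrank_mul {E : Type*} [NormedAddCommGroup E] [NormedSpace ℂ E]
    [FiniteDimensional ℂ E] (T : E →ₗ[ℂ] E) {C : ℝ}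
    (hT : ∀ x : E, ‖T x‖ ≤ C * ‖x‖) :
    ‖LinearMap.trace ℂ E T‖ ≤ (Module.finrank ℂ E : ℝ) * C := by
  set b := Module.finBasis ℂ E with hb
  set A := LinearMap.toMatrix b b T with hA
  have htr : LinearMap.trace ℂ E T = A.trace := LinearMap.trace_eq_matrix_trace ℂ b T
  have hcard : A.charpoly.roots.card = Module.finrank ℂ E := by
    rw [(Polynomial.splits_iff_card_roots).1 (IsAlgClosed.splits A.charpoly),
      Matrix.charpoly_natDegree_eq_dim, Fintype.card_fin]
  have hroot : ∀ r ∈ A.charpoly.roots.map (fun z => ‖z‖), r ≤ C := by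
    intro r hr
    obtain ⟨lam, hlam, rfl⟩ := Multiset.mem_map.1 hr
    obtain ⟨x, hx, hTx⟩ := exists_eigenvector_of_isRoot_charpoly T lam
      (Polynomial.isRoot_of_mem_roots hlam)
    have hxpos : (0:ℝ) < ‖x‖ := norm_pos_iff.2 hx
    have hle : ‖lam‖ * ‖x‖ ≤ C * ‖x‖ := by
      calc ‖lam‖ * ‖x‖ = ‖lam • x‖ := by
            rw [norm_smul]
        _ = ‖T x‖ := by rw [hTx]
        _ ≤ C * ‖x‖ := hT x
    exact le_of_mul_le_mul_right hle hxpos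
  calc ‖LinearMap.trace ℂ E T‖
      = ‖A.charpoly.roots.sum‖ := by
        rw [htr, Matrix.trace_eq_sum_roots_charpoly]
    _ ≤ (A.charpoly.roots.map (fun z => ‖z‖)).sum := norm_multiset_sum_le _
    _ ≤ (A.charpoly.roots.map (fun z => ‖z‖)).card • C :=
        Multiset.sum_le_card_nsmul _ _ hroot
    _ = (Module.finrank ℂ E : ℝ) * C := by
        rw [Multiset.card_map, hcard, nsmul_eq_mul]

/-- A posteriori bound for the mean approximate eigenvalue (core estimate of
Theorem 3 of Section 5): with `P` a bounded projection whose range `M` has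
finite dimension `m ≥ 1` and is invariant under `K'`, `g = K'|_M`, and
`h = (P ∘ K)|_M`, one has `|(1/m)·tr(h) - (1/m)·tr(g)| ≤ ‖P‖·‖(K - K') ∘ P‖`. -/
theorem mean_eigenvalue_residual_bound {F : Type*} [NormedAddCommGroup F]
    [NormedSpace ℂ F] [CompleteSpace F]
    (K K' P : F →L[ℂ] F) (hP : P ∘L P = P)
    [FiniteDimensional ℂ (LinearMap.range (P : F →ₗ[ℂ] F))]
    (m : ℕ) (hm : 1 ≤ m)
    (hdim : Module.finrank ℂ (LinearMap.range (P : F →ₗ[ℂ] F)) = m)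
    (hinv : ∀ x ∈ LinearMap.range (P : F →ₗ[ℂ] F),
      (K' : F →ₗ[ℂ] F) x ∈ LinearMap.range (P : F →ₗ[ℂ] F))
    (hPK : ∀ x ∈ LinearMap.range (P : F →ₗ[ℂ] F),
      ((P ∘L K : F →L[ℂ] F) : F →ₗ[ℂ] F) x ∈ LinearMap.range (P : F →ₗ[ℂ] F)) :
    ‖(1 / (m : ℂ)) * LinearMap.trace ℂ (LinearMap.range (P : F →ₗ[ℂ] F))
            (((P ∘L K : F →L[ℂ] F) : F →ₗ[ℂ] F).restrict hPK) -
          (1 / (m : ℂ)) * LinearMap.trace ℂ (LinearMap.range (P : F →ₗ[ℂ] F))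
            ((K' : F →ₗ[ℂ] F).restrict hinv)‖ ≤
      ‖P‖ * ‖(K - K') ∘L P‖ := by
  set M := LinearMap.range (P : F →ₗ[ℂ] F)
  set h' := (((P ∘L K : F →L[ℂ] F) : F →ₗ[ℂ] F)).restrict hPK with hh'
  set g' := ((K' : F →ₗ[ℂ] F)).restrict hinv with hg'
  set T := h' - g' with hT
  -- P fixes its range
  have hfix : ∀ y ∈ M, P y = y := by
    rintro y ⟨z, rfl⟩
    have := ContinuousLinearMap.ext_iff.1 hP z
    simpa [ContinuousLinearMap.comp_apply] using this
  -- pointwise bound on T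
  set C : ℝ := ‖P‖ * ‖(K - K') ∘L P‖ with hC
  have hTx : ∀ x : M, ‖T x‖ ≤ C * ‖x‖ := by
    intro x
    have hcoe : ((T x : M) : F) = (P ∘L ((K - K') ∘L P)) (x : F) := by
      have e1 : ((h' x : M) : F) = P (K (x : F)) := rfl
      have e2 : ((g' x : M) : F) = K' (x : F) := rfl
      have e3 : ((T x : M) : F) = P (K (x : F)) - K' (x : F) := by
        rw [hT]; simp only [LinearMap.sub_apply, Submodule.coe_sub, e1, e2]
      rw [e3]
      simp only [ContinuousLinearMap.comp_apply, ContinuousLinearMap.sub_apply]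
      rw [hfix _ x.2, map_sub]
      exact congrArg (fun t => P (K ↑x) - t) (hfix _ (hinv _ x.2)).symm
    have h1 : ‖T x‖ = ‖(P ∘L ((K - K') ∘L P)) (x : F)‖ := by
      rw [← hcoe]; rfl
    calc ‖T x‖ = ‖(P ∘L ((K - K') ∘L P)) (x : F)‖ := h1
      _ ≤ ‖P ∘L ((K - K') ∘L P)‖ * ‖(x : F)‖ := ContinuousLinearMap.le_opNorm _ _
      _ ≤ C * ‖x‖ := by
          apply mul_le_mul_of_nonneg_right (ContinuousLinearMap.opNorm_comp_le _ _) (norm_nonneg _)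
  have htrace := abs_trace_le_finrank_mul T hTx
  rw [hdim] at htrace
  have hm0 : (0:ℝ) < (m:ℝ) := by exact_mod_cast Nat.lt_of_lt_of_le Nat.zero_lt_one hm
  have habs : ‖(1 / (m : ℂ)) * LinearMap.trace ℂ M h' -
      (1 / (m : ℂ)) * LinearMap.trace ℂ M g'‖ =
      (1 / (m:ℝ)) * ‖LinearMap.trace ℂ M T‖ := by
    have e : LinearMap.trace ℂ M h' - LinearMap.trace ℂ M g' = LinearMap.trace ℂ M T :=
      (map_sub (LinearMap.trace ℂ M) h' g').symm
    rw [← mul_sub, norm_mul, e]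
    congr 1
    rw [norm_div, norm_one, Complex.norm_natCast]
  rw [habs]
  calc (1 / (m:ℝ)) * ‖LinearMap.trace ℂ M T‖
      ≤ (1 / (m:ℝ)) * ((m:ℝ) * C) := by
        apply mul_le_mul_of_nonneg_left htrace (by positivity)
    _ = C := by field_simp
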